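/- Let L(u) = u_t − a(x,t)u_{xx} + b(x,t)u_x + c(x,t)u with a ≥ 0, |b| ≤ C bounded, and c(x,t) ≥ −a₀ for constants C, a₀ ≥ 0. If u is bounded, continuous on ℝ × [0,T], C² in x and C¹ in t for 0 < t ≤ T, and L(u) = f with f bounded, then sup_{x∈ℝ, 0≤t≤T} |u(x,t)| ≤ (sup_x |u(x,0)| + T·sup_{x,t} |f(x,t)|)·exp(a₀T). -/

import Mathlib

open Real MeasureTheory Set

/-- If `φ` attains a global max at `x₀`, is differentiable everywhere,
and `deriv φ` is differentiable at `x₀`, then `deriv (deriv φ) x₀ ≤ 0`. -/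
lemma deriv2_nonpos_of_max {φ : ℝ → ℝ} {x₀ : ℝ}
    (hmax : ∀ x, φ x ≤ φ x₀)
    (hd : ∀ x, DifferentiableAt ℝ φ x)
    (hd2 : DifferentiableAt ℝ (deriv φ) x₀) :
    deriv (deriv φ) x₀ ≤ 0 := by
  by_contra hpos
  push_neg at hpos
  have h1 : deriv φ x₀ = 0 := by
    have : IsLocalMax φ x₀ := (isMaxOn_univ_iff.2 hmax).isLocalMax (by simp)
    exact this.deriv_eq_zero
  -- the slope of deriv φ tends to deriv (deriv φ) x₀ > 0
  have hslope := hasDerivAt_iff_tendsto_slope.1 hd2.hasDerivAt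
  have hev : ∀ᶠ x in nhdsWithin x₀ {x₀}ᶜ, 0 < slope (deriv φ) x₀ x :=
    hslope.eventually (eventually_gt_nhds hpos)
  have hev' : ∀ᶠ x in nhdsWithin x₀ (Ioi x₀), 0 < deriv φ x := by
    have : nhdsWithin x₀ (Ioi x₀) ≤ nhdsWithin x₀ {x₀}ᶜ :=
      nhdsWithin_mono _ (fun y hy => ne_of_gt hy)
    filter_upwards [this hev, self_mem_nhdsWithin] with x hx hx'
    rw [slope_def_field, h1, sub_zero] at hx
    have := mul_pos hx (sub_pos.2 (mem_Ioi.1 hx'))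
    rwa [div_mul_cancel₀] at this
    exact sub_ne_zero.2 (ne_of_gt hx')
  obtain ⟨η, hη, hI⟩ := mem_nhdsGT_iff_exists_Ioo_subset.1 hev'
  have hmono : StrictMonoOn φ (Icc x₀ η) := by
    apply strictMonoOn_of_deriv_pos (convex_Icc _ _)
    · exact fun x _ => (hd x).continuousAt.continuousWithinAt
    · intro x hx
      rw [interior_Icc] at hx
      exact hI hx
  have hlt : φ x₀ < φ η := by
    apply hmono (left_mem_Icc.2 (le_of_lt (mem_Ioi.1 hη)))
      (right_mem_Icc.2 (le_of_lt (mem_Ioi.1 hη))) (mem_Ioi.1 hη)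
  exact absurd (hmax η) (not_le.2 hlt)

/-- If `θ τ ≤ θ t₀` for all `τ ≤ t₀` and `θ` is differentiable at `t₀`,
then `deriv θ t₀ ≥ 0`. -/
lemma deriv_nonneg_of_left_max {θ : ℝ → ℝ} {t₀ : ℝ} (ht₀ : 0 < t₀)
    (hmax : ∀ τ, 0 ≤ τ → τ ≤ t₀ → θ τ ≤ θ t₀)
    (hd : DifferentiableAt ℝ θ t₀) :
    0 ≤ deriv θ t₀ := by
  have hslope := hasDerivAt_iff_tendsto_slope.1 hd.hasDerivAt
  have h : Filter.Tendsto (slope θ t₀) (nhdsWithin t₀ (Iio t₀)) (nhds (deriv θ t₀)) :=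
    hslope.mono_left (nhdsWithin_mono _ (fun y hy => ne_of_lt hy))
  have hposev : ∀ᶠ τ in nhdsWithin t₀ (Iio t₀), 0 < τ :=
    eventually_nhdsWithin_of_eventually_nhds (eventually_gt_nhds ht₀)
  have : ∀ᶠ τ in nhdsWithin t₀ (Iio t₀), 0 ≤ slope θ t₀ τ := by
    filter_upwards [self_mem_nhdsWithin, hposev] with τ hτ hτpos
    rw [slope_def_field]
    exact div_nonneg_of_nonpos
      (sub_nonpos.2 (hmax τ hτpos.le (le_of_lt (mem_Iio.1 hτ))))
      (sub_nonpos.2 (le_of_lt (mem_Iio.1 hτ)))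
  exact ge_of_tendsto h this

/-- A barrier adapted to a possibly unbounded diffusion coefficient `a`: a `C²`
function `g ≥ 1` growing to `∞`, with `|g'| ≤ 2` and `a·g'' ≤ 1` on the strip. -/
lemma exists_barrier (T : ℝ) (hT : 0 < T) (a : ℝ → ℝ → ℝ)
    (hacont : Continuous ↿a) (ha : ∀ x t : ℝ, 0 ≤ a x t) :
    ∃ g : ℝ → ℝ,
      (∀ x, 1 ≤ g x) ∧
      (∀ x, DifferentiableAt ℝ g x) ∧
      (∀ x, DifferentiableAt ℝ (deriv g) x) ∧
      (∀ x, |deriv g x| ≤ 2) ∧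
      (∀ x t : ℝ, 0 ≤ t → t ≤ T → a x t * deriv (deriv g) x ≤ 1) ∧
      (∀ M : ℝ, ∃ R : ℝ, ∀ x, R ≤ |x| → M ≤ g x) := by
  have hacont' : Continuous fun p : ℝ × ℝ => a p.1 p.2 := hacont
  -- the running sup of `a` on expanding rectangles
  set m : ℝ → ℝ := fun r => sSup ((fun p : ℝ × ℝ => a p.1 p.2) '' (Icc (-r) r ×ˢ Icc 0 T))
    with hm_def
  have hmbdd : ∀ r, BddAbove ((fun p : ℝ × ℝ => a p.1 p.2) '' (Icc (-r) r ×ˢ Icc 0 T)) :=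
    fun r => ((isCompact_Icc.prod isCompact_Icc).image hacont').bddAbove
  have ham : ∀ x t r : ℝ, |x| ≤ r → 0 ≤ t → t ≤ T → a x t ≤ m r := by
    intro x t r hxr ht0 htT
    exact le_csSup (hmbdd r) ⟨(x, t), ⟨⟨(abs_le.1 hxr).1, (abs_le.1 hxr).2⟩, ht0, htT⟩, rfl⟩
  have hm0 : ∀ r : ℝ, 0 ≤ r → 0 ≤ m r := by
    intro r hr
    exact le_trans (ha 0 0) (ham 0 0 r (by simpa using hr) le_rfl hT.le)
  have hmnonneg : ∀ r : ℝ, 0 ≤ m r := by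
    intro r
    rcases le_or_gt 0 r with hr | hr
    · exact hm0 r hr
    · have h2 : (Icc (-r) r ×ˢ Icc (0:ℝ) T) = ∅ := by
        rw [Set.prod_eq_empty_iff]; exact Or.inl (Icc_eq_empty (by linarith))
      show (0:ℝ) ≤ sSup _
      rw [h2, Set.image_empty, Real.sSup_empty]
  have hmmono : Monotone m := by
    intro r r' hrr'
    rcases le_or_gt 0 r with hr | hr
    · apply csSup_le_csSup (hmbdd r')
      · exact ⟨a 0 0, ⟨(0, 0), ⟨⟨by simpa using neg_nonpos.mpr hr, by simpa using hr⟩,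
          ⟨le_rfl, hT.le⟩⟩, rfl⟩⟩
      · exact Set.image_mono (Set.prod_mono (Icc_subset_Icc (by linarith) hrr') le_rfl)
    · have h2 : (Icc (-r) r ×ˢ Icc (0:ℝ) T) = ∅ := by
        rw [Set.prod_eq_empty_iff]; exact Or.inl (Icc_eq_empty (by linarith))
      have : m r = 0 := by
        show sSup _ = 0
        rw [h2, Set.image_empty, Real.sSup_empty]
      rw [this]; exact hmnonneg r'
  -- the weight `q` and the slope `ρ`
  set q : ℝ → ℝ := fun s => (1 + m s)⁻¹ with hq_def
  have h1m : ∀ s, (0:ℝ) < 1 + m s := fun s => by have := hmnonneg s; linarith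
  have hq_pos : ∀ s, 0 < q s := fun s => inv_pos.2 (h1m s)
  have hq_le1 : ∀ s, q s ≤ 1 := fun s => inv_le_one_of_one_le₀ (by have := hmnonneg s; linarith)
  have hq_anti : Antitone q := by
    intro s s' hss'
    exact inv_anti₀ (h1m s) (by have := hmmono hss'; linarith)
  have hq_int : ∀ α β : ℝ, IntervalIntegrable q volume α β := fun α β =>
    hq_anti.intervalIntegrable
  set ρ : ℝ → ℝ := fun x => ∫ s in (|x| + 1)..(|x| + 2), q s with hρ_def
  have hρcont : Continuous ρ := by
    have hprim : Continuous fun y => ∫ s in (0:ℝ)..y, q s :=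
      intervalIntegral.continuous_primitive hq_int 0
    have : ρ = fun x => (∫ s in (0:ℝ)..(|x| + 2), q s) - ∫ s in (0:ℝ)..(|x| + 1), q s := by
      funext x
      show (∫ s in (|x| + 1)..(|x| + 2), q s) = _
      rw [← intervalIntegral.integral_interval_sub_left (hq_int 0 (|x| + 2)) (hq_int 0 (|x| + 1))]
    rw [this]
    exact (hprim.comp (continuous_abs.add continuous_const)).sub
      (hprim.comp (continuous_abs.add continuous_const))
  have hρ_le : ∀ x t : ℝ, 0 ≤ t → t ≤ T → ρ x ≤ (1 + a x t)⁻¹ := by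
    intro x t ht0 htT
    have h1a : (0:ℝ) < 1 + a x t := by have := ha x t; linarith
    have hle : ∀ s ∈ Icc (|x| + 1) (|x| + 2), q s ≤ (1 + a x t)⁻¹ := by
      intro s hs
      refine inv_anti₀ h1a ?_
      have : a x t ≤ m s := ham x t s (by linarith [hs.1, abs_nonneg x]) ht0 htT
      linarith
    calc ρ x ≤ ∫ _ in (|x| + 1)..(|x| + 2), (1 + a x t)⁻¹ := by
          apply intervalIntegral.integral_mono_on (by linarith) (hq_int _ _)
            intervalIntegrable_const hle
      _ = (1 + a x t)⁻¹ := by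
          rw [intervalIntegral.integral_const]
          ring_nf
  have hρa : ∀ x t : ℝ, 0 ≤ t → t ≤ T → a x t * ρ x ≤ 1 := by
    intro x t ht0 htT
    have h1a : (0:ℝ) < 1 + a x t := by have := ha x t; linarith
    calc a x t * ρ x ≤ a x t * (1 + a x t)⁻¹ :=
          mul_le_mul_of_nonneg_left (hρ_le x t ht0 htT) (ha x t)
      _ ≤ 1 := by
          rw [← div_eq_mul_inv, div_le_one h1a]; linarith
  have hρ_pos : ∀ x, 0 < ρ x := by
    intro x
    have : (0:ℝ) < (1 + m (|x| + 2))⁻¹ := inv_pos.2 (h1m _)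
    calc (0:ℝ) < (1 + m (|x| + 2))⁻¹ := this
      _ = ∫ _ in (|x| + 1)..(|x| + 2), (1 + m (|x| + 2))⁻¹ := by
          rw [intervalIntegral.integral_const]; ring_nf
      _ ≤ ρ x := by
          apply intervalIntegral.integral_mono_on (by linarith) intervalIntegrable_const
            (hq_int _ _)
          intro s hs
          exact hq_anti hs.2
  have hρ_le1 : ∀ x, ρ x ≤ 1 := by
    intro x
    calc ρ x ≤ ∫ _ in (|x| + 1)..(|x| + 2), (1:ℝ) := by
          apply intervalIntegral.integral_mono_on (by linarith) (hq_int _ _)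
            intervalIntegrable_const (fun s _ => hq_le1 s)
      _ = 1 := by rw [intervalIntegral.integral_const]; ring_nf
  -- the primitive `H` of `ρ`
  set H : ℝ → ℝ := fun x => ∫ s in (0:ℝ)..x, ρ s with hH_def
  have hρ_int : ∀ α β : ℝ, IntervalIntegrable ρ volume α β := fun α β =>
    hρcont.intervalIntegrable α β
  have hHd : ∀ x, HasDerivAt H (ρ x) x := by
    intro x
    exact intervalIntegral.integral_hasDerivAt_right (hρ_int 0 x)
      (hρcont.stronglyMeasurableAtFilter _ _) hρcont.continuousAt
  have hHcont : Continuous H := intervalIntegral.continuous_primitive hρ_int 0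
  have hHmono : Monotone H := by
    intro x y hxy
    have : H y - H x = ∫ s in x..y, ρ s := by
      rw [← intervalIntegral.integral_interval_sub_left (hρ_int 0 y) (hρ_int 0 x)]
    have hnn : (0:ℝ) ≤ ∫ s in x..y, ρ s :=
      intervalIntegral.integral_nonneg hxy (fun u _ => (hρ_pos u).le)
    linarith
  have hH0 : H 0 = 0 := intervalIntegral.integral_same
  have hH1 : 0 < H 1 :=
    intervalIntegral.intervalIntegral_pos_of_pos (hρ_int 0 1) hρ_pos zero_lt_one
  have hHm1 : H (-1) < 0 := by
    have : 0 < ∫ s in (-1:ℝ)..0, ρ s :=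
      intervalIntegral.intervalIntegral_pos_of_pos (hρ_int (-1) 0) hρ_pos (by norm_num)
    have h2 : H 0 - H (-1) = ∫ s in (-1:ℝ)..0, ρ s := by
      rw [← intervalIntegral.integral_interval_sub_left (hρ_int 0 0) (hρ_int 0 (-1))]
    rw [hH0] at h2
    linarith
  -- the barrier `g`
  have harc_cont : Continuous fun s => arctan (H s) := Real.continuous_arctan.comp hHcont
  have harc_int : ∀ α β : ℝ, IntervalIntegrable (fun s => arctan (H s)) volume α β :=
    fun α β => harc_cont.intervalIntegrable α β
  set g : ℝ → ℝ := fun x => 1 + ∫ s in (0:ℝ)..x, arctan (H s) with hg_def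
  have hgd : ∀ x, HasDerivAt g (arctan (H x)) x := by
    intro x
    exact (intervalIntegral.integral_hasDerivAt_right (harc_int 0 x)
      (harc_cont.stronglyMeasurableAtFilter _ _) harc_cont.continuousAt).const_add 1
  have hg' : deriv g = fun x => arctan (H x) := funext fun x => (hgd x).deriv
  have hg'' : ∀ x, HasDerivAt (fun x => arctan (H x)) (1 / (1 + H x ^ 2) * ρ x) x := by
    intro x
    exact (Real.hasDerivAt_arctan (H x)).comp x (hHd x)
  refine ⟨g, ?_, ?_, ?_, ?_, ?_, ?_⟩
  · -- 1 ≤ g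
    intro x
    rcases le_or_gt 0 x with hx | hx
    · have : (0:ℝ) ≤ ∫ s in (0:ℝ)..x, arctan (H s) :=
        intervalIntegral.integral_nonneg hx (fun u hu => by
          have : 0 ≤ H u := by rw [← hH0]; exact hHmono hu.1
          simpa [Real.arctan_zero] using Real.arctan_strictMono.monotone this)
      show (1:ℝ) ≤ 1 + ∫ s in (0:ℝ)..x, arctan (H s)
      linarith
    · have hint : (∫ s in (0:ℝ)..x, arctan (H s)) = -∫ s in x..(0:ℝ), arctan (H s) :=
        intervalIntegral.integral_symm x 0
      have hnp : (∫ s in x..(0:ℝ), arctan (H s)) ≤ ∫ s in x..(0:ℝ), (0:ℝ) := by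
        apply intervalIntegral.integral_mono_on hx.le (harc_int _ _) intervalIntegrable_const
        intro u hu
        have : H u ≤ 0 := by rw [← hH0]; exact hHmono hu.2
        simpa [Real.arctan_zero] using Real.arctan_strictMono.monotone this
      rw [intervalIntegral.integral_const, smul_eq_mul, mul_zero] at hnp
      show (1:ℝ) ≤ 1 + ∫ s in (0:ℝ)..x, arctan (H s)
      rw [hint]
      linarith
  · exact fun x => (hgd x).differentiableAt
  · intro x
    rw [hg']
    exact (hg'' x).differentiableAt
  · intro x
    rw [hg']
    have h1 := Real.arctan_lt_pi_div_two (H x)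
    have h2 := Real.neg_pi_div_two_lt_arctan (H x)
    have hpi := Real.pi_le_four
    rw [abs_le]; constructor <;> nlinarith
  · intro x t ht0 htT
    have : deriv (deriv g) x = 1 / (1 + H x ^ 2) * ρ x := by
      rw [hg']; exact (hg'' x).deriv
    rw [this]
    have hfrac : 1 / (1 + H x ^ 2) * ρ x ≤ ρ x := by
      have h1 : (0:ℝ) < 1 + H x ^ 2 := by positivity
      have : 1 / (1 + H x ^ 2) ≤ 1 := by
        rw [div_le_one h1]; nlinarith
      nlinarith [hρ_pos x]
    calc a x t * (1 / (1 + H x ^ 2) * ρ x) ≤ a x t * ρ x :=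
          mul_le_mul_of_nonneg_left hfrac (ha x t)
      _ ≤ 1 := hρa x t ht0 htT
  · -- growth at infinity
    intro M
    set δ : ℝ := arctan (H 1) with hδ_def
    set δ' : ℝ := -arctan (H (-1)) with hδ'_def
    have hδpos : 0 < δ := by
      have := Real.arctan_strictMono hH1
      rw [Real.arctan_zero] at this; exact this
    have hδ'pos : 0 < δ' := by
      have := Real.arctan_strictMono hHm1
      rw [Real.arctan_zero] at this
      simp only [hδ'_def]; linarith
    set δm : ℝ := min δ δ' with hδm_def
    have hδmpos : 0 < δm := lt_min hδpos hδ'pos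
    refine ⟨1 + (|M| + 1) / δm, ?_⟩
    intro x hx
    have hR1 : (1:ℝ) ≤ 1 + (|M| + 1) / δm := by
      have : (0:ℝ) ≤ (|M| + 1) / δm := by positivity
      linarith
    have hkey : 1 + (|x| - 1) * δm ≤ g x := by
      rcases le_or_gt 0 x with hx0 | hx0
      · -- positive side
        have hx1 : (1:ℝ) ≤ x := by
          rw [abs_of_nonneg hx0] at hx; linarith [div_nonneg (by positivity : (0:ℝ) ≤ |M| + 1) hδmpos.le]
        have hsplit : (∫ s in (0:ℝ)..1, arctan (H s)) + (∫ s in (1:ℝ)..x, arctan (H s))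
            = ∫ s in (0:ℝ)..x, arctan (H s) :=
          intervalIntegral.integral_add_adjacent_intervals (harc_int 0 1) (harc_int 1 x)
        have h01 : (0:ℝ) ≤ ∫ s in (0:ℝ)..1, arctan (H s) :=
          intervalIntegral.integral_nonneg zero_le_one (fun u hu => by
            have : 0 ≤ H u := by rw [← hH0]; exact hHmono hu.1
            simpa [Real.arctan_zero] using Real.arctan_strictMono.monotone this)
        have h1x : (x - 1) * δ ≤ ∫ s in (1:ℝ)..x, arctan (H s) := by
          have := intervalIntegral.integral_mono_on (f := fun _ => δ)
            (g := fun s => arctan (H s)) hx1 intervalIntegrable_const (harc_int 1 x)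
            (fun u hu => Real.arctan_strictMono.monotone (hHmono hu.1))
          rwa [intervalIntegral.integral_const, smul_eq_mul] at this
        have : 1 + (x - 1) * δm ≤ g x := by
          show 1 + (x - 1) * δm ≤ 1 + ∫ s in (0:ℝ)..x, arctan (H s)
          have hmm : (x - 1) * δm ≤ (x - 1) * δ :=
            mul_le_mul_of_nonneg_left (min_le_left _ _) (by linarith)
          linarith
        rwa [abs_of_nonneg hx0]
      · -- negative side
        have hxm1 : x ≤ -1 := by
          rw [abs_of_neg hx0] at hx
          have : (0:ℝ) ≤ (|M| + 1) / δm := by positivity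
          linarith
        have hsplit : (∫ s in x..(-1:ℝ), arctan (H s)) + (∫ s in (-1:ℝ)..(0:ℝ), arctan (H s))
            = ∫ s in x..(0:ℝ), arctan (H s) :=
          intervalIntegral.integral_add_adjacent_intervals (harc_int x (-1)) (harc_int (-1) 0)
        have hm10 : (∫ s in (-1:ℝ)..(0:ℝ), arctan (H s)) ≤ 0 := by
          have := intervalIntegral.integral_mono_on (f := fun s => arctan (H s))
            (g := fun _ => (0:ℝ)) (by norm_num) (harc_int (-1) 0) intervalIntegrable_const
            (fun u hu => by
              have : H u ≤ 0 := by rw [← hH0]; exact hHmono hu.2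
              simpa [Real.arctan_zero] using Real.arctan_strictMono.monotone this)
          simpa using this
        have hxm : (∫ s in x..(-1:ℝ), arctan (H s)) ≤ (-1 - x) * (-δ') := by
          have := intervalIntegral.integral_mono_on (f := fun s => arctan (H s))
            (g := fun _ => -δ') hxm1 (harc_int x (-1)) intervalIntegrable_const
            (fun u hu => by
              have : arctan (H u) ≤ arctan (H (-1)) :=
                Real.arctan_strictMono.monotone (hHmono hu.2)
              simp only [hδ'_def, neg_neg]; exact this)
          rwa [intervalIntegral.integral_const, smul_eq_mul] at this
        have hint : (∫ s in (0:ℝ)..x, arctan (H s)) = -∫ s in x..(0:ℝ), arctan (H s) :=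
          intervalIntegral.integral_symm x 0
        have : 1 + (-x - 1) * δm ≤ g x := by
          show 1 + (-x - 1) * δm ≤ 1 + ∫ s in (0:ℝ)..x, arctan (H s)
          have hmm : (-x - 1) * δm ≤ (-x - 1) * δ' :=
            mul_le_mul_of_nonneg_left (min_le_right _ _) (by linarith)
          rw [hint]
          nlinarith
        rwa [abs_of_neg hx0]
    have : 1 + (|M| + 1) / δm * δm ≤ 1 + |x| * δm - δm := by
      have h2 : (1 + (|M| + 1) / δm) * δm ≤ |x| * δm := mul_le_mul_of_nonneg_right hx hδmpos.le
      nlinarith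
    rw [div_mul_cancel₀ _ (ne_of_gt hδmpos)] at this
    have habs : M ≤ |M| := le_abs_self M
    nlinarith [hkey]

set_option maxHeartbeats 1000000 in
/-- One-sided comparison: `u ≤ (M₀ + F t) e^{a₀ t}` on the strip. -/
lemma one_side (T a₀ C : ℝ) (hT : 0 < T) (ha₀ : 0 ≤ a₀) (hC : 0 ≤ C)
    (a b c f u : ℝ → ℝ → ℝ)
    (ha : ∀ x t : ℝ, 0 ≤ a x t)
    (hb : ∀ x t : ℝ, |b x t| ≤ C)
    (hc : ∀ x t : ℝ, -a₀ ≤ c x t)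
    (hu_cont : Continuous ↿u)
    (K : ℝ) (hK : ∀ x t : ℝ, u x t ≤ K)
    (M₀ F : ℝ) (hM₀ : 0 ≤ M₀) (hM : ∀ x : ℝ, u x 0 ≤ M₀)
    (hF : 0 ≤ F) (hf : ∀ x t : ℝ, f x t ≤ F)
    (g : ℝ → ℝ)
    (hg1 : ∀ x, 1 ≤ g x)
    (hgd : ∀ x, DifferentiableAt ℝ g x)
    (hgd2 : ∀ x, DifferentiableAt ℝ (deriv g) x)
    (hg'le : ∀ x, |deriv g x| ≤ 2)
    (hag : ∀ x t : ℝ, 0 ≤ t → t ≤ T → a x t * deriv (deriv g) x ≤ 1)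
    (hginf : ∀ M : ℝ, ∃ R : ℝ, ∀ x, R ≤ |x| → M ≤ g x)
    (hreg_t : ∀ x t : ℝ, 0 < t → t ≤ T → DifferentiableAt ℝ (fun τ => u x τ) t)
    (hreg_x : ∀ x t : ℝ, 0 < t → t ≤ T →
      DifferentiableAt ℝ (fun y => u y t) x ∧
      DifferentiableAt ℝ (deriv fun y => u y t) x)
    (heq : ∀ x t : ℝ, 0 < t → t ≤ T →
      deriv (fun τ => u x τ) t
        - a x t * deriv (deriv fun y => u y t) x
        + b x t * deriv (fun y => u y t) x
        + c x t * u x t = f x t) :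
    ∀ x t : ℝ, 0 ≤ t → t ≤ T → u x t ≤ (M₀ + F * t) * Real.exp (a₀ * t) := by
  have hgcont : Continuous g := continuous_iff_continuousAt.2 fun x => (hgd x).continuousAt
  set μ : ℝ := 2 * C + 2 with hμ_def
  have hμpos : 0 < μ := by positivity
  -- main claim, for each ε > 0
  have main : ∀ ε : ℝ, 0 < ε → ∀ x t : ℝ, 0 ≤ t → t ≤ T →
      u x t * Real.exp (-(a₀ * t)) - (M₀ + F * t) - ε * Real.exp (μ * t) * g x ≤ 0 := by
    intro ε hε
    set w : ℝ → ℝ → ℝ := fun x t =>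
      u x t * Real.exp (-(a₀ * t)) - (M₀ + F * t) - ε * Real.exp (μ * t) * g x with hw_def
    by_contra hcon
    push_neg at hcon
    obtain ⟨x₁, t₁, ht₁0, ht₁T, hw₁⟩ := hcon
    -- outside a compact set, w < 0
    obtain ⟨R₀, hR₀⟩ := hginf ((|K| + 1) / ε)
    set R : ℝ := |R₀| + 1 with hR_def
    have houtside : ∀ x t : ℝ, 0 ≤ t → t ≤ T → R ≤ |x| → w x t < 0 := by
      intro x t ht0 htT hxR
      have hgx : (|K| + 1) / ε ≤ g x := hR₀ x (by have := le_abs_self R₀; linarith)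
      have h1 : u x t * Real.exp (-(a₀ * t)) ≤ |K| := by
        have hE1 : Real.exp (-(a₀ * t)) ≤ 1 := by
          rw [Real.exp_le_one_iff]; nlinarith
        have hEpos : 0 < Real.exp (-(a₀ * t)) := Real.exp_pos _
        rcases le_or_gt (u x t) 0 with hu0 | hu0
        · nlinarith [abs_nonneg K]
        · nlinarith [hK x t, le_abs_self K]
      have h2 : ε * g x ≤ ε * Real.exp (μ * t) * g x := by
        have h5 : (1:ℝ) ≤ Real.exp (μ * t) := by
          rw [Real.one_le_exp_iff]; positivity
        have hg0 : (0:ℝ) ≤ g x := le_trans zero_le_one (hg1 x)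
        have : ε * 1 ≤ ε * Real.exp (μ * t) := by nlinarith
        calc ε * g x = ε * 1 * g x := by ring
          _ ≤ ε * Real.exp (μ * t) * g x := mul_le_mul_of_nonneg_right this hg0
      have h3 : |K| + 1 ≤ ε * g x := by
        rw [div_le_iff₀ hε] at hgx; nlinarith
      have h4 : 0 ≤ M₀ + F * t := by nlinarith
      simp only [hw_def]
      nlinarith
    -- the witness point is inside
    have hx₁R : |x₁| < R := by
      by_contra h
      exact absurd hw₁ (not_lt.2 (houtside x₁ t₁ ht₁0 ht₁T (not_lt.1 h)).le)
    -- maximize w on the compact set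
    set W : ℝ × ℝ → ℝ := fun p => w p.1 p.2 with hW_def
    have hWcont : Continuous W := by
      apply Continuous.sub
      apply Continuous.sub
      · exact hu_cont.mul ((Real.continuous_exp.comp
          ((continuous_const.mul continuous_snd).neg)))
      · exact continuous_const.add (continuous_const.mul continuous_snd)
      · exact (continuous_const.mul
          (Real.continuous_exp.comp (continuous_const.mul continuous_snd))).mul
          (hgcont.comp continuous_fst)
    have hScomp : IsCompact (Icc (-R) R ×ˢ Icc (0:ℝ) T) := isCompact_Icc.prod isCompact_Icc
    have hSne : (Icc (-R) R ×ˢ Icc (0:ℝ) T).Nonempty := by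
      exact ⟨(x₁, t₁), Set.mk_mem_prod ⟨(abs_le.1 hx₁R.le).1, (abs_le.1 hx₁R.le).2⟩ ⟨ht₁0, ht₁T⟩⟩
    obtain ⟨p₀, hp₀S, hp₀max⟩ := hScomp.exists_isMaxOn hSne hWcont.continuousOn
    obtain ⟨x₀, t₀⟩ := p₀
    have hx₀ : x₀ ∈ Icc (-R) R := hp₀S.1
    have ht₀ : t₀ ∈ Icc (0:ℝ) T := hp₀S.2
    have hw₀pos : 0 < w x₀ t₀ := by
      have := hp₀max (Set.mk_mem_prod ⟨(abs_le.1 hx₁R.le).1, (abs_le.1 hx₁R.le).2⟩ ⟨ht₁0, ht₁T⟩)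
      exact lt_of_lt_of_le hw₁ this
    -- global maximality on the strip
    have hglobal : ∀ y s : ℝ, 0 ≤ s → s ≤ T → w y s ≤ w x₀ t₀ := by
      intro y s hs0 hsT
      rcases le_or_gt R |y| with hy | hy
      · exact le_of_lt (lt_trans (houtside y s hs0 hsT hy) hw₀pos)
      · exact hp₀max (Set.mk_mem_prod ⟨(abs_le.1 hy.le).1, (abs_le.1 hy.le).2⟩ ⟨hs0, hsT⟩)
    -- t₀ > 0
    have ht₀pos : 0 < t₀ := by
      rcases lt_or_eq_of_le ht₀.1 with h | h
      · exact h
      · exfalso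
        have : w x₀ t₀ ≤ 0 := by
          simp only [hw_def, ← h, mul_zero, neg_zero, Real.exp_zero, mul_one, one_mul]
          have := hM x₀
          nlinarith [hg1 x₀]
        linarith
    have ht₀T : t₀ ≤ T := ht₀.2
    have hEpos : (0:ℝ) < Real.exp (-(a₀ * t₀)) := Real.exp_pos _
    have hE1 : Real.exp (-(a₀ * t₀)) ≤ 1 := by
      rw [Real.exp_le_one_iff]; nlinarith
    have hEm1 : (1:ℝ) ≤ Real.exp (μ * t₀) := by
      rw [Real.one_le_exp_iff]; positivity
    have hPpos : (0:ℝ) < ε * Real.exp (μ * t₀) := by positivity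
    -- space derivatives at the max point
    have hφd : ∀ y, HasDerivAt (fun y => w y t₀)
        (deriv (fun z => u z t₀) y * Real.exp (-(a₀ * t₀))
          - ε * Real.exp (μ * t₀) * deriv g y) y := by
      intro y
      have h1 : HasDerivAt (fun z => u z t₀) (deriv (fun z => u z t₀) y) y :=
        (hreg_x y t₀ ht₀pos ht₀T).1.hasDerivAt
      have h2 : HasDerivAt g (deriv g y) y := (hgd y).hasDerivAt
      simp only [hw_def]
      exact ((h1.mul_const _).sub_const _).sub (h2.const_mul _)
    have hφderiv : deriv (fun y => w y t₀) = fun y =>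
        deriv (fun z => u z t₀) y * Real.exp (-(a₀ * t₀))
          - ε * Real.exp (μ * t₀) * deriv g y :=
      funext fun y => (hφd y).deriv
    have hφmax : ∀ y, w y t₀ ≤ w x₀ t₀ := fun y => hglobal y t₀ ht₀.1 ht₀T
    have hφdiff : ∀ y, DifferentiableAt ℝ (fun y => w y t₀) y :=
      fun y => (hφd y).differentiableAt
    have hd2' : HasDerivAt (fun y => deriv (fun z => u z t₀) y * Real.exp (-(a₀ * t₀))
          - ε * Real.exp (μ * t₀) * deriv g y)
        (deriv (deriv (fun z => u z t₀)) x₀ * Real.exp (-(a₀ * t₀))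
          - ε * Real.exp (μ * t₀) * deriv (deriv g) x₀) x₀ := by
      have ha1 : HasDerivAt (deriv (fun z => u z t₀))
          (deriv (deriv (fun z => u z t₀)) x₀) x₀ :=
        (hreg_x x₀ t₀ ht₀pos ht₀T).2.hasDerivAt
      have ha2 : HasDerivAt (deriv g) (deriv (deriv g) x₀) x₀ := (hgd2 x₀).hasDerivAt
      exact (ha1.mul_const _).sub (ha2.const_mul _)
    have hφd2 : DifferentiableAt ℝ (deriv (fun y => w y t₀)) x₀ := by
      rw [hφderiv]; exact hd2'.differentiableAt
    -- first derivative vanishes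
    have hfirst : deriv (fun z => u z t₀) x₀ * Real.exp (-(a₀ * t₀))
        - ε * Real.exp (μ * t₀) * deriv g x₀ = 0 := by
      have hloc : IsLocalMax (fun y => w y t₀) x₀ :=
        (isMaxOn_univ_iff.2 hφmax).isLocalMax (by simp)
      have h0 := hloc.deriv_eq_zero
      rw [hφderiv] at h0
      exact h0
    -- second derivative is nonpositive
    have hsecond : deriv (deriv (fun z => u z t₀)) x₀ * Real.exp (-(a₀ * t₀))
        - ε * Real.exp (μ * t₀) * deriv (deriv g) x₀ ≤ 0 := by
      have h2 := deriv2_nonpos_of_max hφmax hφdiff hφd2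
      rw [hφderiv, hd2'.deriv] at h2
      exact h2
    -- time derivative at the max point
    have hθd : HasDerivAt (fun τ => w x₀ τ)
        (deriv (fun τ => u x₀ τ) t₀ * Real.exp (-(a₀ * t₀))
          + u x₀ t₀ * (Real.exp (-(a₀ * t₀)) * (-a₀)) - F
          - ε * (Real.exp (μ * t₀) * μ) * g x₀) t₀ := by
      have h1 : HasDerivAt (fun τ => u x₀ τ) (deriv (fun τ => u x₀ τ) t₀) t₀ :=
        (hreg_t x₀ t₀ ht₀pos ht₀T).hasDerivAt
      have hlin : HasDerivAt (fun τ : ℝ => -(a₀ * τ)) (-a₀) t₀ := by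
        have h := ((hasDerivAt_id' t₀).const_mul a₀).neg; rwa [mul_one] at h
      have hexp1 : HasDerivAt (fun τ : ℝ => Real.exp (-(a₀ * τ)))
          (Real.exp (-(a₀ * t₀)) * (-a₀)) t₀ := by
        exact (Real.hasDerivAt_exp (-(a₀ * t₀))).comp t₀ hlin
      have hlin2 : HasDerivAt (fun τ : ℝ => μ * τ) μ t₀ := by
        simpa using (hasDerivAt_id t₀).const_mul μ
      have hexp2 : HasDerivAt (fun τ : ℝ => Real.exp (μ * τ))
          (Real.exp (μ * t₀) * μ) t₀ := by
        exact (Real.hasDerivAt_exp (μ * t₀)).comp t₀ hlin2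
      have hmul : HasDerivAt (fun τ => u x₀ τ * Real.exp (-(a₀ * τ)))
          (deriv (fun τ => u x₀ τ) t₀ * Real.exp (-(a₀ * t₀))
            + u x₀ t₀ * (Real.exp (-(a₀ * t₀)) * (-a₀))) t₀ := h1.mul hexp1
      have haff : HasDerivAt (fun τ : ℝ => M₀ + F * τ) F t₀ := by
        simpa using ((hasDerivAt_id t₀).const_mul F).const_add M₀
      have hbar : HasDerivAt (fun τ => ε * Real.exp (μ * τ) * g x₀)
          (ε * (Real.exp (μ * t₀) * μ) * g x₀) t₀ := by
        have h3 := (hexp2.const_mul ε).mul_const (g x₀)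
        simpa [mul_assoc] using h3
      simp only [hw_def]
      exact (hmul.sub haff).sub hbar
    have hθnn : 0 ≤ deriv (fun τ => u x₀ τ) t₀ * Real.exp (-(a₀ * t₀))
        + u x₀ t₀ * (Real.exp (-(a₀ * t₀)) * (-a₀)) - F
        - ε * (Real.exp (μ * t₀) * μ) * g x₀ := by
      have hθmax : ∀ τ, 0 ≤ τ → τ ≤ t₀ → w x₀ τ ≤ w x₀ t₀ :=
        fun τ hτ0 hτt₀ => hglobal x₀ τ hτ0 (le_trans hτt₀ ht₀T)
      have h4 := deriv_nonneg_of_left_max ht₀pos hθmax hθd.differentiableAt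
      rwa [hθd.deriv] at h4
    -- assemble the contradiction
    have hequ := heq x₀ t₀ ht₀pos ht₀T
    have hu₀pos : 0 < u x₀ t₀ * Real.exp (-(a₀ * t₀)) := by
      have h := hw₀pos
      simp only [hw_def] at h
      have hgpos : (0:ℝ) < ε * Real.exp (μ * t₀) * g x₀ :=
        mul_pos hPpos (lt_of_lt_of_le zero_lt_one (hg1 x₀))
      have hFt : 0 ≤ F * t₀ := mul_nonneg hF ht₀.1
      linarith
    have hgineq : a x₀ t₀ * deriv (deriv g) x₀ ≤ 1 := hag x₀ t₀ ht₀.1 ht₀T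
    have hb' : |b x₀ t₀| ≤ C := hb x₀ t₀
    have hc' : -a₀ ≤ c x₀ t₀ := hc x₀ t₀
    have ha' : 0 ≤ a x₀ t₀ := ha x₀ t₀
    -- estimate the second-order term
    have hstep1 : a x₀ t₀ * deriv (deriv (fun z => u z t₀)) x₀ * Real.exp (-(a₀ * t₀))
        ≤ ε * Real.exp (μ * t₀) := by
      have h5 : a x₀ t₀ * (deriv (deriv (fun z => u z t₀)) x₀ * Real.exp (-(a₀ * t₀)))
          ≤ a x₀ t₀ * (ε * Real.exp (μ * t₀) * deriv (deriv g) x₀) :=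
        mul_le_mul_of_nonneg_left (by linarith) ha'
      have h6 := mul_le_mul_of_nonneg_left hgineq hPpos.le
      nlinarith
    -- estimate the first-order term
    have hstep2 : -(b x₀ t₀ * (deriv (fun z => u z t₀) x₀ * Real.exp (-(a₀ * t₀))))
        ≤ 2 * C * (ε * Real.exp (μ * t₀)) := by
      have hux : deriv (fun z => u z t₀) x₀ * Real.exp (-(a₀ * t₀))
          = ε * Real.exp (μ * t₀) * deriv g x₀ := by linarith
      rw [hux]
      have habs : |b x₀ t₀ * deriv g x₀| ≤ C * 2 :=
        (abs_mul _ _).le.trans (mul_le_mul hb' (hg'le x₀) (abs_nonneg _) hC)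
      have h7 : -(C * 2) ≤ b x₀ t₀ * deriv g x₀ := neg_le_of_abs_le habs
      have h8 := mul_le_mul_of_nonneg_left (neg_le_neg h7) hPpos.le
      nlinarith
    -- estimate the zero-order term
    have hstep3 : -((c x₀ t₀ + a₀) * (u x₀ t₀ * Real.exp (-(a₀ * t₀)))) ≤ 0 := by
      have := mul_nonneg (by linarith : (0:ℝ) ≤ c x₀ t₀ + a₀) hu₀pos.le
      linarith
    -- estimate the source term
    have hstep4 : f x₀ t₀ * Real.exp (-(a₀ * t₀)) ≤ F := by
      nlinarith [mul_nonneg (sub_nonneg.2 (hf x₀ t₀)) hEpos.le,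
        mul_nonneg hF (sub_nonneg.2 hE1)]
    -- estimate the barrier growth term
    have hstep5 : ε * Real.exp (μ * t₀) * μ ≤ ε * (Real.exp (μ * t₀) * μ) * g x₀ := by
      nlinarith [hg1 x₀, mul_pos hPpos hμpos]
    -- multiply the equation by the exponential factor
    have hequE : (deriv (fun τ => u x₀ τ) t₀
          - a x₀ t₀ * deriv (deriv fun y => u y t₀) x₀
          + b x₀ t₀ * deriv (fun y => u y t₀) x₀
          + c x₀ t₀ * u x₀ t₀) * Real.exp (-(a₀ * t₀))
        = f x₀ t₀ * Real.exp (-(a₀ * t₀)) := by rw [hequ]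
    nlinarith [hθnn, hequE, hstep1, hstep2, hstep3, hstep4, hstep5]
  -- now let ε → 0
  intro x t ht0 htT
  have hle : u x t * Real.exp (-(a₀ * t)) ≤ M₀ + F * t := by
    have key : ∀ δ : ℝ, 0 < δ → u x t * Real.exp (-(a₀ * t)) ≤ (M₀ + F * t) + δ := by
      intro δ hδ
      have hgpos : 0 < Real.exp (μ * t) * g x := by
        have := hg1 x
        nlinarith [Real.exp_pos (μ * t)]
      have hε : 0 < δ / (Real.exp (μ * t) * g x) := div_pos hδ hgpos
      have := main _ hε x t ht0 htT
      have h9 : δ / (Real.exp (μ * t) * g x) * Real.exp (μ * t) * g x = δ := by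
        rw [div_mul_eq_mul_div, div_mul_eq_mul_div, div_eq_iff hgpos.ne']
        ring
      nlinarith
    by_contra hlt
    push_neg at hlt
    obtain ⟨δ, hδpos, hδlt⟩ : ∃ δ : ℝ, 0 < δ ∧ (M₀ + F * t) + δ
        < u x t * Real.exp (-(a₀ * t)) :=
      ⟨(u x t * Real.exp (-(a₀ * t)) - (M₀ + F * t)) / 2, by linarith, by linarith⟩
    exact absurd (key δ hδpos) (not_le.2 hδlt)
  have hExp : Real.exp (-(a₀ * t)) * Real.exp (a₀ * t) = 1 := by
    rw [← Real.exp_add]; simp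
  have hEpos' : 0 < Real.exp (a₀ * t) := Real.exp_pos _
  have := mul_le_mul_of_nonneg_right hle hEpos'.le
  calc u x t = u x t * (Real.exp (-(a₀ * t)) * Real.exp (a₀ * t)) := by rw [hExp]; ring
    _ = u x t * Real.exp (-(a₀ * t)) * Real.exp (a₀ * t) := by ring
    _ ≤ (M₀ + F * t) * Real.exp (a₀ * t) := this


/-- Parabolic maximum-principle sup bound: for
`L(u) = u_t − a u_{xx} + b u_x + c u = f` on `ℝ × (0,T]` with `a ≥ 0`, `|b| ≤ C`,
`c ≥ −a₀`, and `u` bounded and continuous on `ℝ × [0,T]`, one has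
`sup |u| ≤ (sup_x |u(x,0)| + T·sup |f|)·exp(a₀T)`. -/
theorem parabolic_sup_bound (T a₀ C : ℝ) (hT : 0 < T) (ha₀ : 0 ≤ a₀) (hC : 0 ≤ C)
    (a b c f u : ℝ → ℝ → ℝ)
    (hacont : Continuous ↿a) (hbcont : Continuous ↿b) (hccont : Continuous ↿c)
    (ha : ∀ x t : ℝ, 0 ≤ a x t)
    (hb : ∀ x t : ℝ, |b x t| ≤ C)
    (hc : ∀ x t : ℝ, -a₀ ≤ c x t)
    (hu_cont : Continuous ↿u)
    (hu_bdd : ∃ K : ℝ, ∀ x t : ℝ, |u x t| ≤ K)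
    (hf_bdd : BddAbove (Set.range fun p : ℝ × ℝ => |f p.1 p.2|))
    (hu0_bdd : BddAbove (Set.range fun x : ℝ => |u x 0|))
    (hreg_t : ∀ x t : ℝ, 0 < t → t ≤ T → DifferentiableAt ℝ (fun τ => u x τ) t)
    (hreg_x : ∀ x t : ℝ, 0 < t → t ≤ T →
      DifferentiableAt ℝ (fun y => u y t) x ∧
      DifferentiableAt ℝ (deriv fun y => u y t) x)
    (heq : ∀ x t : ℝ, 0 < t → t ≤ T →
      deriv (fun τ => u x τ) t
        - a x t * deriv (deriv fun y => u y t) x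
        + b x t * deriv (fun y => u y t) x
        + c x t * u x t = f x t) :
    ∀ x t : ℝ, 0 ≤ t → t ≤ T →
      |u x t| ≤ ((⨆ y : ℝ, |u y 0|)
          + T * ⨆ p : ℝ × ℝ, |f p.1 p.2|) * Real.exp (a₀ * T) := by
  intro x t ht0 htT
  set M₀ : ℝ := ⨆ y : ℝ, |u y 0| with hM₀_def
  set F : ℝ := ⨆ p : ℝ × ℝ, |f p.1 p.2| with hF_def
  have hM₀ge : ∀ y : ℝ, |u y 0| ≤ M₀ := fun y => le_ciSup hu0_bdd y
  have hFge : ∀ y s : ℝ, |f y s| ≤ F := fun y s => le_ciSup hf_bdd (y, s)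
  have hM₀0 : 0 ≤ M₀ := le_trans (abs_nonneg _) (hM₀ge 0)
  have hF0 : 0 ≤ F := le_trans (abs_nonneg _) (hFge 0 0)
  obtain ⟨K, hK⟩ := hu_bdd
  obtain ⟨g, hg1, hgd, hgd2, hg'le, hag, hginf⟩ := exists_barrier T hT a hacont ha
  -- upper bound for u
  have hup := one_side T a₀ C hT ha₀ hC a b c f u ha hb hc hu_cont K
    (fun y s => (abs_le.1 (hK y s)).2) M₀ F hM₀0
    (fun y => le_trans (le_abs_self _) (hM₀ge y)) hF0
    (fun y s => le_trans (le_abs_self _) (hFge y s))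
    g hg1 hgd hgd2 hg'le hag hginf hreg_t hreg_x heq
  -- lower bound via -u
  have hdneg : ∀ y s : ℝ, 0 < s → s ≤ T →
      DifferentiableAt ℝ (fun z => -u z s) y ∧
      DifferentiableAt ℝ (deriv fun z => -u z s) y := by
    intro y s hs0 hsT
    refine ⟨(hreg_x y s hs0 hsT).1.neg, ?_⟩
    have hder : (deriv fun z => -u z s) = fun z => -deriv (fun z' => u z' s) z :=
      funext fun z => deriv.neg
    rw [hder]
    exact (hreg_x y s hs0 hsT).2.neg
  have heq' : ∀ y s : ℝ, 0 < s → s ≤ T →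
      deriv (fun τ => -u y τ) s
        - a y s * deriv (deriv fun z => -u z s) y
        + b y s * deriv (fun z => -u z s) y
        + c y s * (-u y s) = -f y s := by
    intro y s hs0 hsT
    have h1 : deriv (fun τ => -u y τ) s = -deriv (fun τ => u y τ) s := deriv.neg
    have h2 : deriv (fun z => -u z s) y = -deriv (fun z => u z s) y := deriv.neg
    have hder : (deriv fun z => -u z s) = fun z => -deriv (fun z' => u z' s) z :=
      funext fun z => deriv.neg
    have h3 : deriv (deriv fun z => -u z s) y
        = -deriv (deriv fun z => u z s) y := by
      rw [hder]; exact deriv.neg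
    rw [h1, h2, h3]
    have := heq y s hs0 hsT
    linarith
  have hdown := one_side T a₀ C hT ha₀ hC a b c (fun y s => -f y s) (fun y s => -u y s)
    ha hb hc (by exact hu_cont.neg) K
    (fun y s => by show -u y s ≤ K; have := (abs_le.1 (hK y s)).1; linarith) M₀ F hM₀0
    (fun y => by show -u y 0 ≤ M₀; have := (abs_le.1 (hM₀ge y)).1; linarith) hF0
    (fun y s => by show -f y s ≤ F; have := (abs_le.1 (hFge y s)).1; linarith)
    g hg1 hgd hgd2 hg'le hag hginf
    (fun y s hs0 hsT => (hreg_t y s hs0 hsT).neg) hdneg heq'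
  have hU := hup x t ht0 htT
  have hL : -u x t ≤ (M₀ + F * t) * Real.exp (a₀ * t) := hdown x t ht0 htT
  have habs : |u x t| ≤ (M₀ + F * t) * Real.exp (a₀ * t) := abs_le.2 ⟨by linarith, hU⟩
  have hmono1 : M₀ + F * t ≤ M₀ + T * F := by nlinarith
  have hmono2 : Real.exp (a₀ * t) ≤ Real.exp (a₀ * T) :=
    Real.exp_le_exp.2 (mul_le_mul_of_nonneg_left htT ha₀)
  calc |u x t| ≤ (M₀ + F * t) * Real.exp (a₀ * t) := habs
    _ ≤ (M₀ + T * F) * Real.exp (a₀ * T) := by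
        apply mul_le_mul hmono1 hmono2 (Real.exp_pos _).le (by nlinarith)
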